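/- arXiv:1310.4785 — 2 statements merged into one kernel-verified Lean document; each statement's English description precedes it below -/
import Mathlib

section
/- The function φ₀ of the quadrilateral Lin–Tobiska–Zhou (QLTZ) element is dual to the cell-average degree of freedom: ⨍_Q φ₀ = 1 and ⨍_{eᵢ} φ₀ = 0 for each edge i = 1, 2, 3, 4, i.e. d₀(φ₀) = 1 and dᵢ(φ₀) = 0 for i = 1,…,4. -/
open MeasureTheory

noncomputable section

/-- Vertex a₁ of the reference convex quadrilateral (points written as (η, ξ)). -/
def a1 (α β : ℝ) : ℝ × ℝ := (-1 - α, 1 - β)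

/-- Vertex a₂. -/
def a2 (α β : ℝ) : ℝ × ℝ := (-1 + α, -1 + β)

/-- Vertex a₃. -/
def a3 (α β : ℝ) : ℝ × ℝ := (1 - α, -1 - β)

/-- Vertex a₄. -/
def a4 (α β : ℝ) : ℝ × ℝ := (1 + α, 1 + β)

/-- The reference convex quadrilateral Q = conv{a₁, a₂, a₃, a₄}. -/
def Quad (α β : ℝ) : Set (ℝ × ℝ) :=
  convexHull ℝ {a1 α β, a2 α β, a3 α β, a4 α β}

/-- Average of `u` over the segment from `P` to `R`:
    ⨍ u = ∫_{t ∈ [0,1]} u((1−t)P + tR) dt. -/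
def edgeAvg (P R : ℝ × ℝ) (u : ℝ × ℝ → ℝ) : ℝ :=
  ∫ t in (0:ℝ)..1, u ((1 - t) • P + t • R)

/-- Average of `u` over the quadrilateral Q: (∫_Q u dλ)/λ(Q). -/
def quadAvg (α β : ℝ) (u : ℝ × ℝ → ℝ) : ℝ :=
  (∫ p in Quad α β, u p) / (volume (Quad α β)).toReal

/-- The basis function φ₀ of the QLTZ element:
φ₀ = −3(3ξ² + 3η² − 2αξ − 2βη − (4 + α² + β²))/(2(α² + β² + 3)),
with ξ(p) = p.2 and η(p) = p.1. -/
def phi0 (α β : ℝ) (p : ℝ × ℝ) : ℝ :=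
  -3 * (3 * p.2 ^ 2 + 3 * p.1 ^ 2 - 2 * α * p.2 - 2 * β * p.1 - (4 + α ^ 2 + β ^ 2)) /
    (2 * (α ^ 2 + β ^ 2 + 3))

/-- φ₁ = −(3/4)ξ² + ((β−1)/2)η + (3+β²)/4 − ((β²−β+3)/6)φ₀. -/
def phi1 (α β : ℝ) (p : ℝ × ℝ) : ℝ :=
  -(3 / 4) * p.2 ^ 2 + (β - 1) / 2 * p.1 + (3 + β ^ 2) / 4 -
    (β ^ 2 - β + 3) / 6 * phi0 α β p

/-- φ₂ = −(3/4)η² + ((α−1)/2)ξ + (3+α²)/4 − ((α²−α+3)/6)φ₀. -/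
def phi2 (α β : ℝ) (p : ℝ × ℝ) : ℝ :=
  -(3 / 4) * p.1 ^ 2 + (α - 1) / 2 * p.2 + (3 + α ^ 2) / 4 -
    (α ^ 2 - α + 3) / 6 * phi0 α β p

/-- φ₃ = −(3/4)ξ² + ((β+1)/2)η + (3+β²)/4 − ((β²+β+3)/6)φ₀. -/
def phi3 (α β : ℝ) (p : ℝ × ℝ) : ℝ :=
  -(3 / 4) * p.2 ^ 2 + (β + 1) / 2 * p.1 + (3 + β ^ 2) / 4 -
    (β ^ 2 + β + 3) / 6 * phi0 α β p

/-- φ₄ = −(3/4)η² + ((α+1)/2)ξ + (3+α²)/4 − ((α²+α+3)/6)φ₀. -/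
def phi4 (α β : ℝ) (p : ℝ × ℝ) : ℝ :=
  -(3 / 4) * p.1 ^ 2 + (α + 1) / 2 * p.2 + (3 + α ^ 2) / 4 -
    (α ^ 2 + α + 3) / 6 * phi0 α β p

open Set

set_option maxHeartbeats 2000000

lemma ii_poly (a b c0 c1 c2 c3 : ℝ) :
    IntervalIntegrable (fun y : ℝ => c0 + c1*y + c2*y^2 + c3*y^3) volume a b := by
  have h : Continuous (fun y : ℝ => c0 + c1*y + c2*y^2 + c3*y^3) := by fun_prop
  exact h.intervalIntegrable _ _

lemma int_quad (b c0 c1 c2 : ℝ) :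
    ∫ y in (0:ℝ)..b, (c0 + c1*y + c2*y^2) = c0*b + c1*b^2/2 + c2*b^3/3 := by
  have h1 : IntervalIntegrable (fun y : ℝ => c0) volume 0 b :=
    (continuous_const).intervalIntegrable _ _
  have h2 : IntervalIntegrable (fun y : ℝ => c1*y) volume 0 b :=
    (continuous_const.mul continuous_id).intervalIntegrable _ _
  have h3 : IntervalIntegrable (fun y : ℝ => c2*y^2) volume 0 b :=
    (continuous_const.mul (continuous_pow 2)).intervalIntegrable _ _
  rw [intervalIntegral.integral_add (h1.add h2) h3, intervalIntegral.integral_add h1 h2,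
    intervalIntegral.integral_const, intervalIntegral.integral_const_mul,
    intervalIntegral.integral_const_mul, integral_id, integral_pow, smul_eq_mul]
  ring

lemma int_cubic (c0 c1 c2 c3 : ℝ) :
    ∫ x in (0:ℝ)..1, (c0 + c1*x + c2*x^2 + c3*x^3) = c0 + c1/2 + c2/3 + c3/4 := by
  have h1 : IntervalIntegrable (fun y : ℝ => c0 + c1*y + c2*y^2) volume 0 1 := by
    have h : Continuous (fun y : ℝ => c0 + c1*y + c2*y^2) := by fun_prop
    exact h.intervalIntegrable _ _
  have h3 : IntervalIntegrable (fun y : ℝ => c3*y^3) volume 0 1 :=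
    (continuous_const.mul (continuous_pow 3)).intervalIntegrable _ _
  have heq : (fun x : ℝ => c0 + c1*x + c2*x^2 + c3*x^3)
      = fun x : ℝ => (c0 + c1*x + c2*x^2) + c3*x^3 := by funext x; ring
  rw [heq, intervalIntegral.integral_add h1 h3, int_quad,
    intervalIntegral.integral_const_mul, integral_pow]
  norm_num
  ring

lemma int01_of_quadratic (f : ℝ → ℝ) (c0 c1 c2 : ℝ) (hf : ∀ t, f t = c0 + c1*t + c2*t^2)
    (h : c0 + c1/2 + c2/3 = 0) : ∫ t in (0:ℝ)..1, f t = 0 := by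
  have heq : (fun t => f t) = fun t => c0 + c1*t + c2*t^2 := funext hf
  rw [heq, int_quad]
  linarith [h]

def R0 : Set (ℝ × ℝ) := {p | 0 ≤ p.1 ∧ 0 ≤ p.2 ∧ p.1 + p.2 ≤ 1}

lemma mem_tri (A B C p : ℝ × ℝ) (c1 c2 c3 : ℝ) (h1 : 0 ≤ c1) (h2 : 0 ≤ c2) (h3 : 0 ≤ c3)
    (hs : c1 + c2 + c3 = 1) (hp : p = c1 • A + c2 • B + c3 • C) :
    p ∈ convexHull ℝ {A, B, C} := by
  have hne : ({B, C} : Set (ℝ × ℝ)).Nonempty := ⟨B, by simp⟩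
  rw [show ({A, B, C} : Set (ℝ × ℝ)) = insert A {B, C} from rfl, convexHull_insert hne,
    mem_convexJoin]
  rcases eq_or_lt_of_le (by linarith : (0:ℝ) ≤ c2 + c3) with h0 | h0
  · have hc2 : c2 = 0 := by linarith
    have hc3 : c3 = 0 := by linarith
    have hc1 : c1 = 1 := by linarith
    have hpA : p = A := by rw [hp, hc1, hc2, hc3]; simp
    refine ⟨A, rfl, B, subset_convexHull ℝ _ (by simp), ?_⟩
    rw [hpA]; exact left_mem_segment ℝ A B
  · set q : ℝ × ℝ := (c2/(c2+c3)) • B + (c3/(c2+c3)) • C with hq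
    refine ⟨A, rfl, q, ?_, ?_⟩
    · rw [convexHull_pair]
      exact ⟨c2/(c2+c3), c3/(c2+c3), div_nonneg h2 h0.le, div_nonneg h3 h0.le,
        by field_simp, rfl⟩
    · refine ⟨c1, c2 + c3, h1, h0.le, by linarith, ?_⟩
      have e2 : (c2+c3) * (c2/(c2+c3)) = c2 := by field_simp
      have e3 : (c2+c3) * (c3/(c2+c3)) = c3 := by field_simp
      rw [hp, hq, smul_add, smul_smul, smul_smul, e2, e3, add_assoc]

lemma R0_convex : Convex ℝ R0 := by
  intro p hp q hq a b ha hb hab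
  obtain ⟨h1, h2, h3⟩ := hp
  obtain ⟨k1, k2, k3⟩ := hq
  refine ⟨?_, ?_, ?_⟩ <;>
    simp only [Prod.fst_add, Prod.snd_add, Prod.smul_fst, Prod.smul_snd, smul_eq_mul] <;>
    nlinarith [mul_nonneg ha h1, mul_nonneg hb k1, mul_nonneg ha h2, mul_nonneg hb k2]

lemma R0_eq : convexHull ℝ {((0:ℝ),(0:ℝ)), ((1:ℝ),(0:ℝ)), ((0:ℝ),(1:ℝ))} = R0 := by
  apply le_antisymm
  · apply convexHull_min
    · rintro p (rfl | rfl | rfl) <;> simp [R0]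
    · exact R0_convex
  · intro p hp
    obtain ⟨hx, hy, hxy⟩ := hp
    exact mem_tri _ _ _ _ (1 - p.1 - p.2) p.1 p.2 (by linarith) hx hy (by ring)
      (by ext <;> simp)

lemma R0_measurable : MeasurableSet R0 := by
  have : R0 = {p : ℝ × ℝ | 0 ≤ p.1} ∩ ({p | 0 ≤ p.2} ∩ {p | p.1 + p.2 ≤ 1}) := by
    ext p; simp [R0, and_assoc]
  rw [this]
  exact (measurableSet_le measurable_const measurable_fst).inter
    ((measurableSet_le measurable_const measurable_snd).inter
      (measurableSet_le (measurable_fst.add measurable_snd) measurable_const))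

lemma R0_compact : IsCompact R0 := by
  rw [← R0_eq]
  exact Set.Finite.isCompact_convexHull (𝕜 := ℝ) (by simp)

lemma integral_R0 (F : ℝ × ℝ → ℝ) (hF : Continuous F) :
    ∫ p in R0, F p = ∫ x in (0:ℝ)..1, ∫ y in (0:ℝ)..(1-x), F (x, y) := by
  have hint : IntegrableOn F R0 volume :=
    hF.continuousOn.integrableOn_compact R0_compact
  rw [← integral_indicator R0_measurable]
  rw [Measure.volume_eq_prod] at hint ⊢
  rw [integral_prod _ ((integrable_indicator_iff R0_measurable).2 hint)]
  have hslice : ∀ x : ℝ,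
      (∫ y, R0.indicator F (x, y)) =
        (Set.Icc (0:ℝ) 1).indicator (fun x => ∫ y in (0:ℝ)..(1-x), F (x, y)) x := by
    intro x
    rcases le_or_gt 0 x with hx | hx
    · have h1 : (fun y => R0.indicator F (x, y)) =
          (Set.Icc 0 (1-x)).indicator (fun y => F (x, y)) := by
        funext y
        by_cases hy : y ∈ Set.Icc (0:ℝ) (1-x)
        · rw [Set.indicator_of_mem hy,
            Set.indicator_of_mem (by exact ⟨hx, hy.1, by linarith [hy.2]⟩ : (x,y) ∈ R0)]
        · rw [Set.indicator_of_notMem hy, Set.indicator_of_notMem (fun hm => hy ⟨hm.2.1, by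
            have := hm.2.2; simp only at this ⊢; linarith⟩)]
      rw [h1, integral_indicator measurableSet_Icc]
      rcases le_or_gt x 1 with hx1 | hx1
      · rw [Set.indicator_of_mem (Set.mem_Icc.2 ⟨hx, hx1⟩), intervalIntegral.integral_of_le (by linarith),
          ← integral_Icc_eq_integral_Ioc]
      · rw [Set.indicator_of_notMem (by simp; intro; linarith)]
        rw [Set.Icc_eq_empty (by linarith), Measure.restrict_empty, integral_zero_measure]
    · have h1 : (fun y => R0.indicator F (x, y)) = fun _ => (0:ℝ) := by
        funext y
        exact Set.indicator_of_notMem (fun hm => absurd hm.1 (not_le.2 hx)) _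
      rw [h1, integral_zero, Set.indicator_of_notMem (by simp; intro; linarith)]
  rw [integral_congr_ae (Filter.Eventually.of_forall hslice)]
  rw [integral_indicator measurableSet_Icc, intervalIntegral.integral_of_le zero_le_one,
    ← integral_Icc_eq_integral_Ioc]

section Tri
variable (P U V : ℝ × ℝ)

def Lmap : (ℝ × ℝ) →L[ℝ] (ℝ × ℝ) :=
  (ContinuousLinearMap.fst ℝ ℝ ℝ).smulRight U + (ContinuousLinearMap.snd ℝ ℝ ℝ).smulRight V

lemma Lmap_apply (p : ℝ × ℝ) : Lmap U V p = p.1 • U + p.2 • V := by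
  simp [Lmap]

lemma Lmap_det : (Lmap U V).det = U.1 * V.2 - U.2 * V.1 := by
  have : (Lmap U V).det = LinearMap.det ((Lmap U V) : (ℝ × ℝ) →ₗ[ℝ] (ℝ × ℝ)) := rfl
  rw [this, ← LinearMap.det_toMatrix (Module.Basis.finTwoProd ℝ), Matrix.det_fin_two]
  simp only [LinearMap.toMatrix_apply, ContinuousLinearMap.coe_coe, Lmap_apply,
    Module.Basis.finTwoProd_zero, Module.Basis.finTwoProd_one, Module.Basis.coe_finTwoProd_repr]
  simp [Prod.fst_add, Prod.snd_add]
  ring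

lemma tri_integral (hd : U.1 * V.2 - U.2 * V.1 ≠ 0) (u : ℝ × ℝ → ℝ) (hu : Continuous u) :
    ∫ p in convexHull ℝ {P, P + U, P + V}, u p =
      |U.1 * V.2 - U.2 * V.1| * ∫ x in (0:ℝ)..1, ∫ y in (0:ℝ)..(1-x),
        u (P + ((x : ℝ) • U + (y : ℝ) • V)) := by
  set L := Lmap U V with hL
  set f : ℝ × ℝ → ℝ × ℝ := fun p => P + L p with hf
  -- f as affine map
  have hAff : ∀ s : Set (ℝ × ℝ), f '' (convexHull ℝ s) = convexHull ℝ (f '' s) := by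
    intro s
    have : f = fun p => L p + P := by funext p; simp [hf, add_comm]
    rw [this]
    exact (L.toLinearMap.toAffineMap + AffineMap.const ℝ (ℝ × ℝ) P).image_convexHull s |>.symm
      ▸ by
        have := AffineMap.image_convexHull (f := L.toLinearMap.toAffineMap + AffineMap.const ℝ (ℝ × ℝ) P) (s := s) (𝕜 := ℝ)
        exact rfl
  -- image of R0
  have himg : f '' R0 = convexHull ℝ {P, P + U, P + V} := by
    rw [← R0_eq, hAff]
    congr 1
    rw [Set.image_insert_eq, Set.image_insert_eq, Set.image_singleton]
    congr 1 <;> [skip; congr 1] <;>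
      simp [hf, hL, Lmap_apply, Prod.ext_iff]
  -- injectivity
  have hinj : Set.InjOn f R0 := by
    intro p _ q _ hpq
    have h1 : p.1 • U + p.2 • V = q.1 • U + q.2 • V := by
      have := hpq
      simp only [hf, Lmap_apply] at this
      exact add_left_cancel this
    have e1 : p.1 * U.1 + p.2 * V.1 = q.1 * U.1 + q.2 * V.1 := congrArg Prod.fst h1
    have e2 : p.1 * U.2 + p.2 * V.2 = q.1 * U.2 + q.2 * V.2 := congrArg Prod.snd h1
    have d1 : (p.1 - q.1) * (U.1 * V.2 - U.2 * V.1) = 0 := by linear_combination V.2 * e1 - V.1 * e2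
    have d2 : (p.2 - q.2) * (U.1 * V.2 - U.2 * V.1) = 0 := by linear_combination U.1 * e2 - U.2 * e1
    have : p.1 = q.1 := by
      rcases mul_eq_zero.1 d1 with h | h
      · linarith
      · exact absurd h hd
    have h2 : p.2 = q.2 := by
      rcases mul_eq_zero.1 d2 with h | h
      · linarith
      · exact absurd h hd
    exact Prod.ext this h2
  have hder : ∀ x ∈ R0, HasFDerivWithinAt f L R0 x := fun x _ =>
    ((L.hasFDerivAt.const_add P).hasFDerivWithinAt)
  rw [← himg, integral_image_eq_integral_abs_det_fderiv_smul volume R0_measurable hder hinj u]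
  have : (fun x => |L.det| • u (f x)) = fun x => |U.1 * V.2 - U.2 * V.1| • (u (P + (x.1 • U + x.2 • V))) := by
    funext x
    rw [hL, Lmap_det]
    simp [hf, hL, Lmap_apply]
  rw [this]
  rw [integral_smul]
  rw [smul_eq_mul]
  congr 1
  exact integral_R0 _ (hu.comp (by continuity))
end Tri

lemma quad_decomp (α β : ℝ) (hα : 0 < α) (hβ : 0 < β) (hαβ : α + β < 1) :
    Quad α β = convexHull ℝ {a1 α β, a2 α β, a3 α β} ∪
      convexHull ℝ {a1 α β, a3 α β, a4 α β} := by
  apply le_antisymm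
  · intro p hp
    rw [Quad, show ({a1 α β, a2 α β, a3 α β, a4 α β} : Set (ℝ × ℝ))
        = insert (a1 α β) {a2 α β, a3 α β, a4 α β} from rfl,
      convexHull_insert ⟨a2 α β, by simp⟩, mem_convexJoin] at hp
    obtain ⟨x, hx1, q, hq, hseg⟩ := hp
    rw [mem_singleton_iff] at hx1
    subst hx1
    rw [show ({a2 α β, a3 α β, a4 α β} : Set (ℝ × ℝ))
        = insert (a2 α β) {a3 α β, a4 α β} from rfl,
      convexHull_insert ⟨a3 α β, by simp⟩, mem_convexJoin] at hq
    obtain ⟨x2, hx2, r, hr, hseg2⟩ := hq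
    rw [mem_singleton_iff] at hx2
    subst hx2
    rw [convexHull_pair] at hr
    obtain ⟨w1, w2, hw1, hw2, hws, hr⟩ := hr
    obtain ⟨s1, s2, hs1, hs2, hss, hq⟩ := hseg2
    obtain ⟨t1, t2, ht1, ht2, hts, hp⟩ := hseg
    set W1 := t1 with hW1
    set W2 := t2 * s1 with hW2
    set W3 := t2 * s2 * w1 with hW3
    set W4 := t2 * s2 * w2 with hW4
    have hW1n : 0 ≤ W1 := ht1
    have hW2n : 0 ≤ W2 := mul_nonneg ht2 hs1
    have hW3n : 0 ≤ W3 := mul_nonneg (mul_nonneg ht2 hs2) hw1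
    have hW4n : 0 ≤ W4 := mul_nonneg (mul_nonneg ht2 hs2) hw2
    have hW : W1 + W2 + W3 + W4 = 1 := by
      rw [hW1, hW2, hW3, hW4]; linear_combination hts + t2 * hss + t2 * s2 * hws
    have hx : p.1 = W1*(-1-α) + W2*(-1+α) + W3*(1-α) + W4*(1+α) := by
      rw [← hp, ← hq, ← hr]
      simp only [a1, a2, a3, a4, Prod.fst_add, Prod.smul_fst, smul_eq_mul,
        hW1, hW2, hW3, hW4]
      ring
    have hy : p.2 = W1*(1-β) + W2*(-1+β) + W3*(-1-β) + W4*(1+β) := by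
      rw [← hp, ← hq, ← hr]
      simp only [a1, a2, a3, a4, Prod.snd_add, Prod.smul_snd, smul_eq_mul,
        hW1, hW2, hW3, hW4]
      ring
    have hs0 : (0:ℝ) < 1 - α - β := by linarith
    have hs0' : (0:ℝ) < 1 + α + β := by linarith
    rcases le_or_gt (W4 * (1+α+β)) (W2 * (1-α-β)) with hcase | hcase
    · left
      apply mem_tri _ _ _ _ ((W1*(1-α-β) + W4*(1+β-α))/(1-α-β))
        ((W2*(1-α-β) - W4*(1+α+β))/(1-α-β)) ((W3*(1-α-β) + W4*(1+α-β))/(1-α-β))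
      · apply div_nonneg _ hs0.le
        nlinarith [mul_nonneg hW4n (by linarith : (0:ℝ) ≤ 1+β-α), mul_nonneg hW1n hs0.le]
      · apply div_nonneg (by linarith) hs0.le
      · apply div_nonneg _ hs0.le
        nlinarith [mul_nonneg hW4n (by linarith : (0:ℝ) ≤ 1+α-β), mul_nonneg hW3n hs0.le]
      · field_simp
        linear_combination (1-α-β) * hW
      · apply Prod.ext
        · simp only [a1, a2, a3, Prod.fst_add, Prod.smul_fst, smul_eq_mul]
          rw [hx]; field_simp; ring
        · simp only [a1, a2, a3, Prod.snd_add, Prod.smul_snd, smul_eq_mul]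
          rw [hy]; field_simp; ring
    · right
      apply mem_tri _ _ _ _ ((W1*(1+α+β) + W2*(1+β-α))/(1+α+β))
        ((W3*(1+α+β) + W2*(1+α-β))/(1+α+β)) ((W4*(1+α+β) - W2*(1-α-β))/(1+α+β))
      · apply div_nonneg _ hs0'.le
        nlinarith [mul_nonneg hW2n (by linarith : (0:ℝ) ≤ 1+β-α), mul_nonneg hW1n hs0'.le]
      · apply div_nonneg _ hs0'.le
        nlinarith [mul_nonneg hW2n (by linarith : (0:ℝ) ≤ 1+α-β), mul_nonneg hW3n hs0'.le]
      · apply div_nonneg (by linarith) hs0'.le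
      · field_simp
        linear_combination (1+α+β) * hW
      · apply Prod.ext
        · simp only [a1, a3, a4, Prod.fst_add, Prod.smul_fst, smul_eq_mul]
          rw [hx]; field_simp; ring
        · simp only [a1, a3, a4, Prod.snd_add, Prod.smul_snd, smul_eq_mul]
          rw [hy]; field_simp; ring
  · apply union_subset
    · exact convexHull_mono (by rintro x (rfl | rfl | rfl) <;> simp)
    · exact convexHull_mono (by rintro x (rfl | rfl | rfl) <;> simp)

lemma line_null (c : ℝ) : volume {p : ℝ × ℝ | p.1 + p.2 = c} = 0 := by
  set s : AffineSubspace ℝ (ℝ × ℝ) :=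
    AffineSubspace.mk' ((0, c) : ℝ × ℝ) (Submodule.span ℝ {((1:ℝ), (-1:ℝ))}) with hs
  have hsub : {p : ℝ × ℝ | p.1 + p.2 = c} ⊆ (s : Set (ℝ × ℝ)) := by
    intro p hp
    rw [hs, AffineSubspace.mem_coe, AffineSubspace.mem_mk']
    refine Submodule.mem_span_singleton.2 ⟨p.1, ?_⟩
    have : p.2 - c = -p.1 := by simp at hp; linarith
    ext <;> simp [this]
  have hne : s ≠ ⊤ := by
    intro h
    have : ((1:ℝ), c+1) ∈ s := by rw [h]; trivial
    rw [hs, AffineSubspace.mem_mk', Submodule.mem_span_singleton] at this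
    obtain ⟨a, ha⟩ := this
    have h1 : a = 1 := by simpa using congrArg Prod.fst ha
    have h2 : -a = c + 1 - c := by simpa using congrArg Prod.snd ha
    rw [h1] at h2; norm_num at h2
  exact measure_mono_null hsub (Measure.addHaar_affineSubspace volume s hne)

variable {α β : ℝ}

lemma quad_integral (hα : 0 < α) (hβ : 0 < β) (hαβ : α + β < 1)
    (u : ℝ × ℝ → ℝ) (hu : Continuous u) :
    ∫ p in Quad α β, u p =
      (4*(1-α-β)) * (∫ x in (0:ℝ)..1, ∫ y in (0:ℝ)..(1-x),
        u (a1 α β + ((x : ℝ) • ((2*α, 2*β-2) : ℝ × ℝ) + (y : ℝ) • ((2, -2) : ℝ × ℝ)))) +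
      (4*(1+α+β)) * (∫ x in (0:ℝ)..1, ∫ y in (0:ℝ)..(1-x),
        u (a1 α β + ((x : ℝ) • ((2, -2) : ℝ × ℝ) + (y : ℝ) • ((2+2*α, 2*β) : ℝ × ℝ)))) := by
  have hT1eq : convexHull ℝ {a1 α β, a2 α β, a3 α β} =
      convexHull ℝ {a1 α β, a1 α β + ((2*α, 2*β-2) : ℝ × ℝ), a1 α β + ((2, -2) : ℝ × ℝ)} := by
    congr 1
    have h2 : a2 α β = a1 α β + ((2*α, 2*β-2) : ℝ × ℝ) := by
      apply Prod.ext <;> simp [a1, a2] <;> ring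
    have h3 : a3 α β = a1 α β + ((2, -2) : ℝ × ℝ) := by
      apply Prod.ext <;> simp [a1, a3] <;> ring
    rw [h2, h3]
  have hT2eq : convexHull ℝ {a1 α β, a3 α β, a4 α β} =
      convexHull ℝ {a1 α β, a1 α β + ((2, -2) : ℝ × ℝ), a1 α β + ((2+2*α, 2*β) : ℝ × ℝ)} := by
    congr 1
    have h3 : a3 α β = a1 α β + ((2, -2) : ℝ × ℝ) := by
      apply Prod.ext <;> simp [a1, a3] <;> ring
    have h4 : a4 α β = a1 α β + ((2+2*α, 2*β) : ℝ × ℝ) := by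
      apply Prod.ext <;> simp [a1, a4] <;> ring
    rw [h3, h4]
  have hd1 : ((2*α : ℝ), 2*β-2).1 * ((2:ℝ), -2).2 - (2*α, 2*β-2).2 * ((2:ℝ), -2).1
      = 4*(1-α-β) := by simp; ring
  have hd2 : ((2:ℝ), -2).1 * ((2+2*α : ℝ), 2*β).2 - ((2:ℝ), -2).2 * (2+2*α, 2*β).1
      = 4*(1+α+β) := by simp; ring
  have hd1pos : (0:ℝ) < 4*(1-α-β) := by linarith
  have hd2pos : (0:ℝ) < 4*(1+α+β) := by linarith
  -- compactness and measurability
  have hc1 : IsCompact (convexHull ℝ {a1 α β, a2 α β, a3 α β}) :=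
    Set.Finite.isCompact_convexHull (𝕜 := ℝ) (by simp)
  have hc2 : IsCompact (convexHull ℝ {a1 α β, a3 α β, a4 α β}) :=
    Set.Finite.isCompact_convexHull (𝕜 := ℝ) (by simp)
  -- ae disjoint
  have hlin : IsLinearMap ℝ (fun p : ℝ × ℝ => p.1 + p.2) :=
    ⟨fun x y => by simp; ring, fun c x => by simp; ring⟩
  have hsub1 : convexHull ℝ {a1 α β, a2 α β, a3 α β} ⊆ {p : ℝ × ℝ | p.1 + p.2 ≤ -(α+β) + 0} := by
    apply convexHull_min _ (convex_halfSpace_le hlin _)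
    rintro p (rfl | rfl | rfl) <;> simp [a1, a2, a3] <;> linarith
  have hsub2 : convexHull ℝ {a1 α β, a3 α β, a4 α β} ⊆ {p : ℝ × ℝ | -(α+β) + 0 ≤ p.1 + p.2} := by
    apply convexHull_min _ (convex_halfSpace_ge hlin _)
    rintro p (rfl | rfl | rfl) <;> simp [a1, a3, a4] <;> linarith
  have hae : AEDisjoint volume (convexHull ℝ {a1 α β, a2 α β, a3 α β})
      (convexHull ℝ {a1 α β, a3 α β, a4 α β}) := by
    apply measure_mono_null (fun p hp => ?_) (line_null (-(α+β)))
    have h1 := hsub1 hp.1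
    have h2 := hsub2 hp.2
    simp only [mem_setOf_eq] at h1 h2 ⊢
    linarith
  rw [quad_decomp α β hα hβ hαβ,
    integral_union_ae hae hc2.isClosed.measurableSet.nullMeasurableSet
      (hu.continuousOn.integrableOn_compact hc1) (hu.continuousOn.integrableOn_compact hc2),
    hT1eq, hT2eq, tri_integral _ _ _ (by rw [hd1]; positivity) u hu,
    tri_integral _ _ _ (by rw [hd2]; positivity) u hu, hd1, hd2,
    abs_of_pos hd1pos, abs_of_pos hd2pos]


lemma quad_volume (hα : 0 < α) (hβ : 0 < β) (hαβ : α + β < 1) :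
    (volume (Quad α β)).toReal = 4 := by
  have h1 : ∫ _ in Quad α β, (1:ℝ) = (volume (Quad α β)).toReal := by
    rw [setIntegral_const]; simp; rfl
  rw [← h1, quad_integral hα hβ hαβ _ continuous_const]
  have hin : ∀ P U V : ℝ × ℝ, (∫ x in (0:ℝ)..1, ∫ y in (0:ℝ)..(1-x),
      (fun _ : ℝ × ℝ => (1:ℝ)) (P + ((x : ℝ) • U + (y : ℝ) • V))) = 1/2 := by
    intro P U V
    have : (fun x : ℝ => ∫ y in (0:ℝ)..(1-x), (1:ℝ)) = fun x : ℝ => 1 + (-1)*x + 0*x^2 := by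
      funext x
      rw [intervalIntegral.integral_const]
      simp; ring
    rw [show (∫ x in (0:ℝ)..1, ∫ y in (0:ℝ)..(1-x), (1:ℝ)) =
        ∫ x in (0:ℝ)..1, (1 + (-1)*x + 0*x^2) from by rw [← this]]
    rw [int_quad]
    norm_num
  rw [hin (a1 α β) (2*α, 2*β-2) (2, -2)]
  ring


/-- φ₀ is dual to the cell-average degree of freedom of the QLTZ element:
d₀(φ₀) = ⨍_Q φ₀ = 1 and dᵢ(φ₀) = ⨍_{eᵢ} φ₀ = 0 for i = 1, 2, 3, 4. -/
theorem phi0_dual (α β : ℝ) (hα : 0 < α) (hβ : 0 < β) (hαβ : α + β < 1) :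
    quadAvg α β (phi0 α β) = 1 ∧
    edgeAvg (a1 α β) (a2 α β) (phi0 α β) = 0 ∧
    edgeAvg (a2 α β) (a3 α β) (phi0 α β) = 0 ∧
    edgeAvg (a3 α β) (a4 α β) (phi0 α β) = 0 ∧
    edgeAvg (a4 α β) (a1 α β) (phi0 α β) = 0 := by
  have hD : (0:ℝ) < 2 * (α ^ 2 + β ^ 2 + 3) := by positivity
  have hDne : (2 * (α ^ 2 + β ^ 2 + 3)) ≠ 0 := ne_of_gt hD
  refine ⟨?_, ?_, ?_, ?_, ?_⟩
  · -- quad average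
    have hcont : Continuous (phi0 α β) := by
      apply Continuous.div_const
      fun_prop
    have hJ1 : (∫ x in (0:ℝ)..1, ∫ y in (0:ℝ)..(1-x),
        phi0 α β (a1 α β + ((x : ℝ) • ((2*α, 2*β-2) : ℝ × ℝ) + (y : ℝ) • ((2, -2) : ℝ × ℝ))))
        = (3 - α - β - 2*α*β) / (2 * (α ^ 2 + β ^ 2 + 3)) := by
      have hinner : ∀ x : ℝ, (∫ y in (0:ℝ)..(1-x),
          phi0 α β (a1 α β + ((x : ℝ) • ((2*α, 2*β-2) : ℝ × ℝ) + (y : ℝ) • ((2, -2) : ℝ × ℝ))))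
          = (6 - 6*β^2 - 12*α*β - 6*α^2) / (2 * (α ^ 2 + β ^ 2 + 3))
            + ((6 - 24*β + 42*β^2 - 24*α + 36*α*β + 42*α^2) / (2 * (α ^ 2 + β ^ 2 + 3))) * x
            + ((-36 + 60*β - 72*β^2 + 60*α - 24*α*β - 72*α^2) / (2 * (α ^ 2 + β ^ 2 + 3))) * x^2
            + ((24 - 36*β + 36*β^2 - 36*α + 36*α^2) / (2 * (α ^ 2 + β ^ 2 + 3))) * x^3 := by
        intro x
        rw [show (fun y : ℝ => phi0 α β (a1 α β +
              ((x : ℝ) • ((2*α, 2*β-2) : ℝ × ℝ) + (y : ℝ) • ((2, -2) : ℝ × ℝ))))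
            = (fun y : ℝ =>
              ((-6 + 36*x - 36*x^2 + 12*β - 72*β*x + 72*β*x^2 - 6*β^2 + 36*β^2*x - 36*β^2*x^2
                - 12*α + 24*α*x - 12*α*β + 24*α*β*x - 6*α^2 + 36*α^2*x - 36*α^2*x^2)
                  / (2 * (α ^ 2 + β ^ 2 + 3)))
              + ((72 - 72*x - 24*β + 72*β*x + 24*α - 72*α*x) / (2 * (α ^ 2 + β ^ 2 + 3))) * y
              + ((-72) / (2 * (α ^ 2 + β ^ 2 + 3))) * y^2) from funext fun y => by
          simp only [phi0, a1, Prod.fst_add, Prod.snd_add, Prod.smul_fst, Prod.smul_snd,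
            smul_eq_mul]
          field_simp
          ring]
        rw [int_quad]
        field_simp
        ring
      rw [intervalIntegral.integral_congr (g :=
          fun x : ℝ => (6 - 6*β^2 - 12*α*β - 6*α^2) / (2 * (α ^ 2 + β ^ 2 + 3))
            + ((6 - 24*β + 42*β^2 - 24*α + 36*α*β + 42*α^2) / (2 * (α ^ 2 + β ^ 2 + 3))) * x
            + ((-36 + 60*β - 72*β^2 + 60*α - 24*α*β - 72*α^2) / (2 * (α ^ 2 + β ^ 2 + 3))) * x^2
            + ((24 - 36*β + 36*β^2 - 36*α + 36*α^2) / (2 * (α ^ 2 + β ^ 2 + 3))) * x^3)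
          (fun x _ => hinner x), int_cubic]
      field_simp
      ring
    have hJ2 : (∫ x in (0:ℝ)..1, ∫ y in (0:ℝ)..(1-x),
        phi0 α β (a1 α β + ((x : ℝ) • ((2, -2) : ℝ × ℝ) + (y : ℝ) • ((2+2*α, 2*β) : ℝ × ℝ))))
        = (3 + α + β - 2*α*β) / (2 * (α ^ 2 + β ^ 2 + 3)) := by
      have hinner : ∀ x : ℝ, (∫ y in (0:ℝ)..(1-x),
          phi0 α β (a1 α β + ((x : ℝ) • ((2, -2) : ℝ × ℝ) + (y : ℝ) • ((2+2*α, 2*β) : ℝ × ℝ))))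
          = (0:ℝ) / (2 * (α ^ 2 + β ^ 2 + 3))
            + ((42 + 24*β + 6*β^2 - 12*α*β + 6*α^2) / (2 * (α ^ 2 + β ^ 2 + 3))) * x
            + ((-90 - 60*β - 18*β^2 + 12*α + 12*α*β - 18*α^2) / (2 * (α ^ 2 + β ^ 2 + 3))) * x^2
            + ((48 + 36*β + 12*β^2 - 12*α + 12*α^2) / (2 * (α ^ 2 + β ^ 2 + 3))) * x^3 := by
        intro x
        rw [show (fun y : ℝ => phi0 α β (a1 α β +
              ((x : ℝ) • ((2, -2) : ℝ × ℝ) + (y : ℝ) • ((2+2*α, 2*β) : ℝ × ℝ))))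
            = (fun y : ℝ =>
              ((-6 + 72*x - 72*x^2 + 12*β - 24*β*x - 6*β^2 - 12*α + 24*α*x - 12*α*β - 6*α^2)
                  / (2 * (α ^ 2 + β ^ 2 + 3)))
              + ((36 - 72*x - 24*β + 72*β*x + 36*β^2 + 72*α - 72*α*x + 24*α*β + 36*α^2)
                  / (2 * (α ^ 2 + β ^ 2 + 3))) * y
              + ((-36 - 36*β^2 - 72*α - 36*α^2) / (2 * (α ^ 2 + β ^ 2 + 3))) * y^2) from
              funext fun y => by
          simp only [phi0, a1, Prod.fst_add, Prod.snd_add, Prod.smul_fst, Prod.smul_snd,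
            smul_eq_mul]
          field_simp
          ring]
        rw [int_quad]
        field_simp
        ring
      rw [intervalIntegral.integral_congr (g :=
          fun x : ℝ => (0:ℝ) / (2 * (α ^ 2 + β ^ 2 + 3))
            + ((42 + 24*β + 6*β^2 - 12*α*β + 6*α^2) / (2 * (α ^ 2 + β ^ 2 + 3))) * x
            + ((-90 - 60*β - 18*β^2 + 12*α + 12*α*β - 18*α^2) / (2 * (α ^ 2 + β ^ 2 + 3))) * x^2
            + ((48 + 36*β + 12*β^2 - 12*α + 12*α^2) / (2 * (α ^ 2 + β ^ 2 + 3))) * x^3)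
          (fun x _ => hinner x), int_cubic]
      field_simp
      ring
    rw [quadAvg, quad_integral hα hβ hαβ _ hcont, hJ1, hJ2, quad_volume hα hβ hαβ]
    field_simp
    ring
  · rw [edgeAvg]
    apply int01_of_quadratic _
      ((-6 + 12*β - 6*β^2 - 12*α - 12*α*β - 6*α^2) / (2 * (α ^ 2 + β ^ 2 + 3)))
      ((36 - 72*β + 36*β^2 + 24*α + 24*α*β + 36*α^2) / (2 * (α ^ 2 + β ^ 2 + 3)))
      ((-36 + 72*β - 36*β^2 - 36*α^2) / (2 * (α ^ 2 + β ^ 2 + 3)))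
    · intro t
      simp only [phi0, a1, a2, Prod.fst_add, Prod.snd_add, Prod.smul_fst, Prod.smul_snd,
        smul_eq_mul]
      field_simp
      ring
    · field_simp
      ring
  · rw [edgeAvg]
    apply int01_of_quadratic _
      ((-6 + 12*β - 6*β^2 + 12*α + 12*α*β - 6*α^2) / (2 * (α ^ 2 + β ^ 2 + 3)))
      ((36 - 24*β + 36*β^2 - 72*α - 24*α*β + 36*α^2) / (2 * (α ^ 2 + β ^ 2 + 3)))
      ((-36 - 36*β^2 + 72*α - 36*α^2) / (2 * (α ^ 2 + β ^ 2 + 3)))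
    · intro t
      simp only [phi0, a2, a3, Prod.fst_add, Prod.snd_add, Prod.smul_fst, Prod.smul_snd,
        smul_eq_mul]
      field_simp
      ring
    · field_simp
      ring
  · rw [edgeAvg]
    apply int01_of_quadratic _
      ((-6 - 12*β - 6*β^2 + 12*α - 12*α*β - 6*α^2) / (2 * (α ^ 2 + β ^ 2 + 3)))
      ((36 + 72*β + 36*β^2 - 24*α + 24*α*β + 36*α^2) / (2 * (α ^ 2 + β ^ 2 + 3)))
      ((-36 - 72*β - 36*β^2 - 36*α^2) / (2 * (α ^ 2 + β ^ 2 + 3)))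
    · intro t
      simp only [phi0, a3, a4, Prod.fst_add, Prod.snd_add, Prod.smul_fst, Prod.smul_snd,
        smul_eq_mul]
      field_simp
      ring
    · field_simp
      ring
  · rw [edgeAvg]
    apply int01_of_quadratic _
      ((-6 - 12*β - 6*β^2 - 12*α + 12*α*β - 6*α^2) / (2 * (α ^ 2 + β ^ 2 + 3)))
      ((36 + 24*β + 36*β^2 + 72*α - 24*α*β + 36*α^2) / (2 * (α ^ 2 + β ^ 2 + 3)))
      ((-36 - 36*β^2 - 72*α - 36*α^2) / (2 * (α ^ 2 + β ^ 2 + 3)))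
    · intro t
      simp only [phi0, a4, a1, Prod.fst_add, Prod.snd_add, Prod.smul_fst, Prod.smul_snd,
        smul_eq_mul]
      field_simp
      ring
    · field_simp
      ring
end
end

section
/- Unisolvence of the quadrilateral Lin–Tobiska–Zhou (QLTZ) element on the reference quadrilateral: the linear map from the space V := span_ℝ{1, ξ, η, ξ², η²} of functions on ℝ² to ℝ⁵ given by v ↦ (⨍_Q v, ⨍_{e₁}v, ⨍_{e₂}v, ⨍_{e₃}v, ⨍_{e₄}v) is bijective; equivalently, for every (c₀, c₁, c₂, c₃, c₄) ∈ ℝ⁵ there is exactly one v ∈ V with ⨍_Q v = c₀ and ⨍_{eᵢ}v = cᵢ for i = 1,…,4. In particular V has dimension 5. -/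
open MeasureTheory

noncomputable section

/-- The QLTZ shape function space V = span_ℝ{1, ξ, η, ξ², η²}, with ξ(p) = p.2, η(p) = p.1. -/
def QLTZspace : Submodule ℝ (ℝ × ℝ → ℝ) :=
  Submodule.span ℝ
    ({fun _ => 1, fun p => p.2, fun p => p.1, fun p => p.2 ^ 2, fun p => p.1 ^ 2} :
      Set (ℝ × ℝ → ℝ))

namespace QLTZaux

/-- Integral of a cubic polynomial. -/
lemma integral_cubic (c0 c1 c2 c3 A B : ℝ) :
    ∫ x in A..B, (c0 + c1*x + c2*x^2 + c3*x^3) =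
      c0*(B-A) + c1*(B^2-A^2)/2 + c2*(B^3-A^3)/3 + c3*(B^4-A^4)/4 := by
  have h : ∀ x : ℝ, HasDerivAt (fun y : ℝ => c0*y + c1*y^2/2 + c2*y^3/3 + c3*y^4/4)
      (c0 + c1*x + c2*x^2 + c3*x^3) x := by
    intro x
    have : HasDerivAt (fun y : ℝ => c0*y + c1*y^2/2 + c2*y^3/3 + c3*y^4/4)
      (c0 * 1 + c1 * ((2:ℕ) * x ^ (2 - 1)) / 2 + c2 * ((3:ℕ) * x ^ (3 - 1)) / 3 +
        c3 * ((4:ℕ) * x ^ (4 - 1)) / 4) x := (((((hasDerivAt_id x).const_mul c0).add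
      (((hasDerivAt_pow 2 x).const_mul c1).div_const 2)).add
      (((hasDerivAt_pow 3 x).const_mul c2).div_const 3)).add
      (((hasDerivAt_pow 4 x).const_mul c3).div_const 4))
    convert this using 1
    push_cast
    ring
  rw [intervalIntegral.integral_eq_sub_of_hasDerivAt (fun x _ => h x)]
  · ring
  · apply Continuous.intervalIntegrable
    continuity



def S : Set (ℝ × ℝ) := {p | 0 ≤ p.1 ∧ 0 ≤ p.2 ∧ p.1 + p.2 ≤ 1}

lemma convex_S : Convex ℝ S := by
  intro x hx y hy a b ha hb hab
  obtain ⟨hx1, hx2, hx3⟩ := hx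
  obtain ⟨hy1, hy2, hy3⟩ := hy
  refine ⟨?_, ?_, ?_⟩ <;> simp only [Prod.smul_mk, Prod.fst_add, Prod.snd_add,
    Prod.smul_fst, Prod.smul_snd, smul_eq_mul] <;> nlinarith

lemma S_eq_hull : S = convexHull ℝ {((0:ℝ),(0:ℝ)), ((1:ℝ),(0:ℝ)), ((0:ℝ),(1:ℝ))} := by
  apply le_antisymm
  · intro p hp
    obtain ⟨h1, h2, h3⟩ := hp
    have := Finset.centerMass_mem_convexHull (Finset.univ : Finset (Fin 3))
      (w := ![1 - p.1 - p.2, p.1, p.2]) (z := ![((0:ℝ),(0:ℝ)), ((1:ℝ),(0:ℝ)), ((0:ℝ),(1:ℝ))])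
      (s := {((0:ℝ),(0:ℝ)), ((1:ℝ),(0:ℝ)), ((0:ℝ),(1:ℝ))})
      (by intro i _; fin_cases i <;> simp <;> linarith)
      (by simp [Fin.sum_univ_three]; linarith)
      (by intro i _; fin_cases i <;> simp)
    rwa [Finset.centerMass, show ∑ i, ![1 - p.1 - p.2, p.1, p.2] i = 1 by
      simp [Fin.sum_univ_three]; ring, inv_one, one_smul, Fin.sum_univ_three,
      show (![1 - p.1 - p.2, p.1, p.2] 0 • ![((0:ℝ),(0:ℝ)), ((1:ℝ),(0:ℝ)), ((0:ℝ),(1:ℝ))] 0 +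
        ![1 - p.1 - p.2, p.1, p.2] 1 • ![((0:ℝ),(0:ℝ)), ((1:ℝ),(0:ℝ)), ((0:ℝ),(1:ℝ))] 1 +
        ![1 - p.1 - p.2, p.1, p.2] 2 • ![((0:ℝ),(0:ℝ)), ((1:ℝ),(0:ℝ)), ((0:ℝ),(1:ℝ))] 2) = p by
      simp only [Matrix.cons_val_zero, Matrix.cons_val_one, Matrix.head_cons,
        Matrix.cons_val_two, Matrix.tail_cons, Prod.smul_mk, smul_eq_mul, Prod.mk_add_mk,
        Prod.ext_iff]
      constructor <;> ring] at this
  · apply convexHull_min _ convex_S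
    intro p hp
    simp only [Set.mem_insert_iff, Set.mem_singleton_iff] at hp
    rcases hp with h | h | h <;> subst h <;> exact ⟨by norm_num, by norm_num, by norm_num⟩

lemma isCompact_S : IsCompact S := by
  rw [S_eq_hull]; exact ((Set.toFinite _).isCompact_convexHull ℝ)

lemma measurableSet_S : MeasurableSet S :=
  isCompact_S.isClosed.measurableSet


lemma integral_S (g : ℝ × ℝ → ℝ) (hg : Continuous g) :
    ∫ p in S, g p = ∫ s in (0:ℝ)..1, ∫ t in (0:ℝ)..(1-s), g (s, t) := by
  have hint : IntegrableOn g S volume :=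
    hg.continuousOn.integrableOn_compact isCompact_S
  have hind : Integrable (S.indicator g) volume := by
    rwa [integrable_indicator_iff measurableSet_S]
  rw [← integral_indicator measurableSet_S]
  rw [Measure.volume_eq_prod] at hind ⊢
  rw [MeasureTheory.integral_prod _ hind]
  have inner : ∀ s : ℝ, (∫ t, S.indicator g (s, t)) =
      (Set.Icc (0:ℝ) 1).indicator (fun s => ∫ t in Set.Icc 0 (1-s), g (s, t)) s := by
    intro s
    by_cases hs : 0 ≤ s ∧ s ≤ 1
    · rw [Set.indicator_of_mem (Set.mem_Icc.2 hs)]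
      have : (fun t => S.indicator g (s, t)) =
          (Set.Icc (0:ℝ) (1-s)).indicator (fun t => g (s, t)) := by
        funext t
        by_cases ht : t ∈ Set.Icc (0:ℝ) (1-s)
        · rw [Set.indicator_of_mem ht, Set.indicator_of_mem]
          exact ⟨hs.1, ht.1, by linarith [ht.2]⟩
        · rw [Set.indicator_of_notMem ht, Set.indicator_of_notMem]
          intro hmem
          exact ht ⟨hmem.2.1, by have := hmem.2.2; simp only at this ⊢; linarith⟩
      rw [this, integral_indicator measurableSet_Icc]
    · rw [Set.indicator_of_notMem (by simpa [Set.mem_Icc] using hs)]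
      have : (fun t => S.indicator g (s, t)) = fun _ => (0:ℝ) := by
        funext t
        apply Set.indicator_of_notMem
        intro hmem
        rcases hmem with ⟨h1, h2, h3⟩
        simp only at h1 h2 h3
        rcases not_and_or.1 hs with h | h
        · exact h h1
        · push_neg at h; linarith
      rw [this, integral_zero]
  simp_rw [inner]
  rw [integral_indicator measurableSet_Icc, MeasureTheory.integral_Icc_eq_integral_Ioc,
    ← intervalIntegral.integral_of_le (by norm_num : (0:ℝ) ≤ 1)]
  apply intervalIntegral.integral_congr
  intro s hs
  rw [Set.uIcc_of_le (by norm_num : (0:ℝ) ≤ 1)] at hs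
  show (∫ t in Set.Icc 0 (1-s), g (s, t)) = _
  rw [MeasureTheory.integral_Icc_eq_integral_Ioc,
    ← intervalIntegral.integral_of_le (by linarith [hs.2] : (0:ℝ) ≤ 1 - s)]


lemma integral_S_quad (k0 k1 k2 k3 k4 k5 : ℝ) :
    ∫ p in S, (k0 + k1*p.1 + k2*p.2 + k3*p.1^2 + k4*(p.1*p.2) + k5*p.2^2) =
      k0/2 + k1/6 + k2/6 + k3/12 + k4/24 + k5/12 := by
  rw [integral_S _ (by continuity)]
  have h1 : ∀ s : ℝ, (∫ t in (0:ℝ)..(1-s),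
      (k0 + k1*s + k2*t + k3*s^2 + k4*(s*t) + k5*t^2)) =
      (k0 + k2/2 + k5/3) + (k1 - k0 + k4/2 - k2 - k5)*s + (k3 - k1 + k2/2 - k4 + k5)*s^2 +
        (-k3 + k4/2 - k5/3)*s^3 := by
    intro s
    have : (∫ t in (0:ℝ)..(1-s), (k0 + k1*s + k2*t + k3*s^2 + k4*(s*t) + k5*t^2)) =
        ∫ t in (0:ℝ)..(1-s), ((k0 + k1*s + k3*s^2) + (k2 + k4*s)*t + k5*t^2 + 0*t^3) := by
      congr 1; ext t; ring
    rw [this, integral_cubic]; ring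
  simp_rw [h1]
  have : (∫ s in (0:ℝ)..1, ((k0 + k2/2 + k5/3) + (k1 - k0 + k4/2 - k2 - k5)*s +
      (k3 - k1 + k2/2 - k4 + k5)*s^2 + (-k3 + k4/2 - k5/3)*s^3)) =
      (k0 + k2/2 + k5/3)*(1-0) + (k1 - k0 + k4/2 - k2 - k5)*(1^2-0^2)/2 +
      (k3 - k1 + k2/2 - k4 + k5)*(1^3-0^3)/3 + (-k3 + k4/2 - k5/3)*(1^4-0^4)/4 :=
    integral_cubic _ _ _ _ _ _
  rw [this]; ring


/-- Affine parametrization of the triangle with vertices P, Q, R. -/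
def trimap (P Q R : ℝ × ℝ) : ℝ × ℝ → ℝ × ℝ := fun p =>
  (P.1 + p.1*(Q.1-P.1) + p.2*(R.1-P.1), P.2 + p.1*(Q.2-P.2) + p.2*(R.2-P.2))

/-- The linear part of `trimap` as a continuous linear map. -/
def triL (P Q R : ℝ × ℝ) : ℝ × ℝ →L[ℝ] ℝ × ℝ :=
  (ContinuousLinearMap.fst ℝ ℝ ℝ).smulRight (Q - P) +
    (ContinuousLinearMap.snd ℝ ℝ ℝ).smulRight (R - P)

lemma triL_apply (P Q R : ℝ × ℝ) (p : ℝ × ℝ) :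
    triL P Q R p = (p.1*(Q.1-P.1) + p.2*(R.1-P.1), p.1*(Q.2-P.2) + p.2*(R.2-P.2)) := by
  simp [triL, Prod.ext_iff]

lemma trimap_eq (P Q R : ℝ × ℝ) (p : ℝ × ℝ) : trimap P Q R p = P + triL P Q R p := by
  rw [triL_apply]
  simp only [trimap, Prod.ext_iff, Prod.fst_add, Prod.snd_add]
  constructor <;> ring

lemma triL_det (P Q R : ℝ × ℝ) :
    (triL P Q R).det = (Q.1-P.1)*(R.2-P.2) - (R.1-P.1)*(Q.2-P.2) := by
  have : (triL P Q R).det = LinearMap.det ((triL P Q R) : ℝ × ℝ →ₗ[ℝ] ℝ × ℝ) := rfl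
  rw [this, ← LinearMap.det_toMatrix (Module.Basis.finTwoProd ℝ), Matrix.det_fin_two]
  simp only [LinearMap.toMatrix_apply, Module.Basis.coe_finTwoProd_repr, Module.Basis.finTwoProd_zero,
    Module.Basis.finTwoProd_one, ContinuousLinearMap.coe_coe]
  rw [triL_apply, triL_apply]
  simp
  try ring

lemma trimap_image (P Q R : ℝ × ℝ) :
    convexHull ℝ {P, Q, R} = trimap P Q R '' S := by
  apply le_antisymm
  · apply convexHull_min
    · intro x hx
      simp only [Set.mem_insert_iff, Set.mem_singleton_iff] at hx
      rcases hx with h | h | h <;> subst h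
      · exact ⟨(0,0), ⟨le_refl 0, le_refl 0, by norm_num⟩, by simp [trimap]⟩
      · exact ⟨(1,0), ⟨by norm_num, le_refl 0, by norm_num⟩, by simp [trimap]⟩
      · exact ⟨(0,1), ⟨le_refl 0, by norm_num, by norm_num⟩, by simp [trimap]⟩
    · rintro x ⟨u, hu, rfl⟩ y ⟨v, hv, rfl⟩ a b ha hb hab
      refine ⟨a • u + b • v, convex_S hu hv ha hb hab, ?_⟩
      simp only [trimap, Prod.smul_mk, Prod.mk_add_mk, Prod.smul_fst, Prod.smul_snd,
        Prod.fst_add, Prod.snd_add, smul_eq_mul, Prod.ext_iff]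
      constructor
      · linear_combination (-P.1) * hab
      · linear_combination (-P.2) * hab
  · rintro x ⟨p, hp, rfl⟩
    obtain ⟨h1, h2, h3⟩ := hp
    have := Finset.centerMass_mem_convexHull (Finset.univ : Finset (Fin 3))
      (w := ![1 - p.1 - p.2, p.1, p.2]) (z := ![P, Q, R]) (s := {P, Q, R})
      (by intro i _; fin_cases i <;> simp <;> linarith)
      (by simp [Fin.sum_univ_three]; linarith)
      (by intro i _; fin_cases i <;> simp)
    rwa [Finset.centerMass, show ∑ i, ![1 - p.1 - p.2, p.1, p.2] i = 1 by
      simp [Fin.sum_univ_three]; ring, inv_one, one_smul, Fin.sum_univ_three,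
      show (![1 - p.1 - p.2, p.1, p.2] 0 • ![P, Q, R] 0 +
        ![1 - p.1 - p.2, p.1, p.2] 1 • ![P, Q, R] 1 +
        ![1 - p.1 - p.2, p.1, p.2] 2 • ![P, Q, R] 2) = trimap P Q R p by
      simp only [Matrix.cons_val_zero, Matrix.cons_val_one, Matrix.head_cons,
        Matrix.cons_val_two, Matrix.tail_cons, trimap, Prod.ext_iff, Prod.smul_fst,
        Prod.smul_snd, Prod.fst_add, Prod.snd_add, smul_eq_mul]
      constructor <;> ring] at this

lemma trimap_injOn (P Q R : ℝ × ℝ)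
    (hD : (Q.1-P.1)*(R.2-P.2) - (R.1-P.1)*(Q.2-P.2) ≠ 0) :
    Set.InjOn (trimap P Q R) S := by
  intro x _ y _ h
  rw [Prod.ext_iff] at h
  obtain ⟨h1, h2⟩ := h
  simp only [trimap] at h1 h2
  have e1 : (x.1 - y.1) * ((Q.1-P.1)*(R.2-P.2) - (R.1-P.1)*(Q.2-P.2)) = 0 := by
    linear_combination (R.2-P.2) * h1 - (R.1-P.1) * h2
  have e2 : (x.2 - y.2) * ((Q.1-P.1)*(R.2-P.2) - (R.1-P.1)*(Q.2-P.2)) = 0 := by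
    linear_combination (Q.1-P.1) * h2 - (Q.2-P.2) * h1
  have hx1 : x.1 = y.1 := by
    rcases mul_eq_zero.1 e1 with h | h
    · linarith
    · exact absurd h hD
  have hx2 : x.2 = y.2 := by
    rcases mul_eq_zero.1 e2 with h | h
    · linarith
    · exact absurd h hD
  exact Prod.ext hx1 hx2

lemma integral_tri (P Q R : ℝ × ℝ) (g : ℝ × ℝ → ℝ)
    (hD : (Q.1-P.1)*(R.2-P.2) - (R.1-P.1)*(Q.2-P.2) ≠ 0) :
    ∫ x in convexHull ℝ {P, Q, R}, g x =
      |(Q.1-P.1)*(R.2-P.2) - (R.1-P.1)*(Q.2-P.2)| * ∫ p in S, g (trimap P Q R p) := by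
  rw [trimap_image]
  have hderiv : ∀ x ∈ S, HasFDerivWithinAt (trimap P Q R) (triL P Q R) S x := by
    intro x _
    have : HasFDerivAt (fun p => P + triL P Q R p) (triL P Q R) x :=
      ((triL P Q R).hasFDerivAt).const_add P
    have heq : trimap P Q R = fun p => P + triL P Q R p := funext (trimap_eq P Q R)
    rw [heq]
    exact this.hasFDerivWithinAt
  rw [MeasureTheory.integral_image_eq_integral_abs_det_fderiv_smul volume measurableSet_S
    hderiv (trimap_injOn P Q R hD) g]
  simp_rw [triL_det, smul_eq_mul]
  rw [MeasureTheory.integral_const_mul]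



lemma mem_tri (P Q R : ℝ × ℝ) {c0 c1 c2 : ℝ} (h0 : 0 ≤ c0) (h1 : 0 ≤ c1) (h2 : 0 ≤ c2)
    (hs : c0 + c1 + c2 = 1) : c0 • P + c1 • Q + c2 • R ∈ convexHull ℝ {P, Q, R} := by
  have := Finset.centerMass_mem_convexHull (Finset.univ : Finset (Fin 3))
    (w := ![c0, c1, c2]) (z := ![P, Q, R]) (s := {P, Q, R})
    (by intro i _; fin_cases i <;> simpa)
    (by simp [Fin.sum_univ_three]; linarith)
    (by intro i _; fin_cases i <;> simp)
  rwa [Finset.centerMass, show ∑ i, ![c0, c1, c2] i = 1 by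
    simpa [Fin.sum_univ_three] using hs, inv_one, one_smul, Fin.sum_univ_three,
    show (![c0, c1, c2] 0 • ![P, Q, R] 0 + ![c0, c1, c2] 1 • ![P, Q, R] 1 +
      ![c0, c1, c2] 2 • ![P, Q, R] 2) = c0 • P + c1 • Q + c2 • R by
    simp [Matrix.cons_val_zero, Matrix.cons_val_one]] at this

lemma quad_rep (α β : ℝ) {p : ℝ × ℝ} (hp : p ∈ Quad α β) :
    ∃ w : Fin 4 → ℝ, (∀ i, 0 ≤ w i) ∧ w 0 + w 1 + w 2 + w 3 = 1 ∧
      p = w 0 • a1 α β + w 1 • a2 α β + w 2 • a3 α β + w 3 • a4 α β := by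
  have hQ : Quad α β = convexHull ℝ (Set.range ![a1 α β, a2 α β, a3 α β, a4 α β]) := by
    unfold Quad
    congr 1
    ext x
    simp [Fin.exists_fin_two, Fin.exists_fin_succ]
    tauto
  rw [hQ, convexHull_range_eq_exists_affineCombination] at hp
  obtain ⟨s, w, h0, h1, rfl⟩ := hp
  refine ⟨fun i => if i ∈ s then w i else 0,
    fun i => by by_cases h : i ∈ s <;> simp [h] ; exact h0 i h, ?_, ?_⟩
  · have hsum : ∑ i, (fun i => if i ∈ s then w i else 0) i = ∑ i ∈ s, w i := by
      rw [Finset.sum_ite_mem, Finset.univ_inter]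
    rw [← Fin.sum_univ_four (fun i => if i ∈ s then w i else 0)] at *
    rw [hsum, h1]
  · rw [Finset.affineCombination_eq_linear_combination s _ _ h1]
    have : ∀ i : Fin 4, (if i ∈ s then w i else 0) • (![a1 α β, a2 α β, a3 α β, a4 α β]) i =
        (if i ∈ s then w i • (![a1 α β, a2 α β, a3 α β, a4 α β]) i else 0) := by
      intro i; split <;> simp
    calc ∑ i ∈ s, w i • ![a1 α β, a2 α β, a3 α β, a4 α β] i
        = ∑ i, (if i ∈ s then w i • ![a1 α β, a2 α β, a3 α β, a4 α β] i else 0) := by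
          rw [Finset.sum_ite_mem, Finset.univ_inter]
      _ = ∑ i, (if i ∈ s then w i else 0) • ![a1 α β, a2 α β, a3 α β, a4 α β] i := by
          simp_rw [this]
      _ = _ := by
          rw [Fin.sum_univ_four]
          simp

lemma quad_union {α β : ℝ} (hα : 0 < α) (hβ : 0 < β) (hαβ : α + β < 1) :
    Quad α β = convexHull ℝ {a1 α β, a2 α β, a3 α β} ∪ convexHull ℝ {a1 α β, a3 α β, a4 α β} := by
  apply le_antisymm
  · intro p hp
    obtain ⟨w, hw0, hws, rfl⟩ := quad_rep α β hp
    have hD : (0:ℝ) < 1 - α - β := by linarith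
    have hE : (0:ℝ) < 1 + α + β := by linarith
    by_cases hcase : w 3 * (1+α+β) ≤ w 1 * (1-α-β)
    · left
      have h0 : 0 ≤ w 0 + w 3 * (1-α+β)/(1-α-β) := by
        have : 0 ≤ w 3 * (1-α+β)/(1-α-β) :=
          div_nonneg (mul_nonneg (hw0 3) (by linarith)) (by linarith)
        linarith [hw0 0]
      have h1 : 0 ≤ w 1 - w 3 * (1+α+β)/(1-α-β) := by
        rw [sub_nonneg, div_le_iff₀ hD]
        linarith
      have h2 : 0 ≤ w 2 + w 3 * (1+α-β)/(1-α-β) := by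
        have : 0 ≤ w 3 * (1+α-β)/(1-α-β) :=
          div_nonneg (mul_nonneg (hw0 3) (by linarith)) (by linarith)
        linarith [hw0 2]
      have hs : (w 0 + w 3 * (1-α+β)/(1-α-β)) + (w 1 - w 3 * (1+α+β)/(1-α-β)) +
          (w 2 + w 3 * (1+α-β)/(1-α-β)) = 1 := by
        field_simp
        linear_combination (1-α-β) * hws
      have := mem_tri (a1 α β) (a2 α β) (a3 α β) h0 h1 h2 hs
      convert this using 1
      simp only [a1, a2, a3, a4, Prod.smul_mk, Prod.mk_add_mk, smul_eq_mul, Prod.ext_iff]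
      constructor <;> field_simp <;> ring
    · right
      push_neg at hcase
      have h0 : 0 ≤ w 0 + w 1 * (1-α+β)/(1+α+β) := by
        have : 0 ≤ w 1 * (1-α+β)/(1+α+β) :=
          div_nonneg (mul_nonneg (hw0 1) (by linarith)) (by linarith)
        linarith [hw0 0]
      have h1 : 0 ≤ w 2 + w 1 * (1+α-β)/(1+α+β) := by
        have : 0 ≤ w 1 * (1+α-β)/(1+α+β) :=
          div_nonneg (mul_nonneg (hw0 1) (by linarith)) (by linarith)
        linarith [hw0 2]
      have h2 : 0 ≤ w 3 - w 1 * (1-α-β)/(1+α+β) := by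
        rw [sub_nonneg, div_le_iff₀ hE]
        nlinarith
      have hs : (w 0 + w 1 * (1-α+β)/(1+α+β)) + (w 2 + w 1 * (1+α-β)/(1+α+β)) +
          (w 3 - w 1 * (1-α-β)/(1+α+β)) = 1 := by
        field_simp
        linear_combination (1+α+β) * hws
      have := mem_tri (a1 α β) (a3 α β) (a4 α β) h0 h1 h2 hs
      convert this using 1
      simp only [a1, a2, a3, a4, Prod.smul_mk, Prod.mk_add_mk, smul_eq_mul, Prod.ext_iff]
      constructor <;> field_simp <;> ring
  · apply Set.union_subset <;> apply convexHull_mono <;> intro x hx <;>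
      simp only [Set.mem_insert_iff, Set.mem_singleton_iff] at hx ⊢ <;> tauto


lemma line_null (c : ℝ) : volume {p : ℝ × ℝ | p.1 + p.2 = c} = 0 := by
  classical
  set K : Submodule ℝ (ℝ × ℝ) := LinearMap.ker ((LinearMap.fst ℝ ℝ ℝ) + (LinearMap.snd ℝ ℝ ℝ))
  have hKmem : ∀ q : ℝ × ℝ, q ∈ K ↔ q.1 + q.2 = 0 := by
    intro q
    simp [K, LinearMap.mem_ker]
  set A : AffineSubspace ℝ (ℝ × ℝ) := AffineSubspace.mk' ((c, 0) : ℝ × ℝ) K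
  have hset : {p : ℝ × ℝ | p.1 + p.2 = c} = (A : Set (ℝ × ℝ)) := by
    ext p
    simp only [Set.mem_setOf_eq, A, SetLike.mem_coe, AffineSubspace.mem_mk',
      vsub_eq_sub]
    rw [hKmem]
    simp only [Prod.fst_sub, Prod.snd_sub]
    constructor <;> intro h <;> simp at h ⊢ <;> linarith
  have hA : A ≠ ⊤ := by
    intro h
    have : ((c+1, 0) : ℝ × ℝ) ∈ A := h ▸ AffineSubspace.mem_top ℝ _ _
    rw [AffineSubspace.mem_mk'] at this
    rw [hKmem] at this
    simp at this
  rw [hset]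
  exact MeasureTheory.Measure.addHaar_affineSubspace volume A hA

lemma tri_inter_null {α β : ℝ} (hα : 0 < α) (hβ : 0 < β) (hαβ : α + β < 1) :
    volume (convexHull ℝ {a1 α β, a2 α β, a3 α β} ∩ convexHull ℝ {a1 α β, a3 α β, a4 α β}) = 0 := by
  apply measure_mono_null _ (line_null (-α - β))
  intro p hp
  obtain ⟨hp1, hp2⟩ := hp
  have hT1 : convexHull ℝ {a1 α β, a2 α β, a3 α β} ⊆ {q : ℝ × ℝ | q.1 + q.2 ≤ -α - β} := by
    apply convexHull_min
    · intro x hx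
      simp only [Set.mem_insert_iff, Set.mem_singleton_iff] at hx
      rcases hx with h | h | h <;> subst h <;> simp [a1, a2, a3] <;> linarith
    · intro x hx y hy t s ht hs hts
      simp only [Set.mem_setOf_eq, Prod.fst_add, Prod.snd_add, Prod.smul_fst, Prod.smul_snd,
        smul_eq_mul] at hx hy ⊢
      nlinarith
  have hT2 : convexHull ℝ {a1 α β, a3 α β, a4 α β} ⊆ {q : ℝ × ℝ | -α - β ≤ q.1 + q.2} := by
    apply convexHull_min
    · intro x hx
      simp only [Set.mem_insert_iff, Set.mem_singleton_iff] at hx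
      rcases hx with h | h | h <;> subst h <;> simp [a1, a3, a4] <;> linarith
    · intro x hx y hy t s ht hs hts
      simp only [Set.mem_setOf_eq, Prod.fst_add, Prod.snd_add, Prod.smul_fst, Prod.smul_snd,
        smul_eq_mul] at hx hy ⊢
      nlinarith
  have := hT1 hp1
  have := hT2 hp2
  simp only [Set.mem_setOf_eq] at *
  linarith

lemma integral_quad_split {α β : ℝ} (hα : 0 < α) (hβ : 0 < β) (hαβ : α + β < 1)
    (g : ℝ × ℝ → ℝ) (hg : Continuous g) :
    ∫ x in Quad α β, g x = (∫ x in convexHull ℝ {a1 α β, a2 α β, a3 α β}, g x) +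
      ∫ x in convexHull ℝ {a1 α β, a3 α β, a4 α β}, g x := by
  rw [quad_union hα hβ hαβ]
  apply MeasureTheory.integral_union_ae
  · exact tri_inter_null hα hβ hαβ
  · exact (((Set.toFinite _).isCompact_convexHull ℝ).isClosed.measurableSet).nullMeasurableSet
  · exact hg.continuousOn.integrableOn_compact ((Set.toFinite _).isCompact_convexHull ℝ)
  · exact hg.continuousOn.integrableOn_compact ((Set.toFinite _).isCompact_convexHull ℝ)


/-- The generator of the kernel of the four edge functionals. -/
def wfun (α β : ℝ) : ℝ × ℝ → ℝ := fun p =>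
  p.1^2 + p.2^2 - (2*β/3)*p.1 - (2*α/3)*p.2 - (4+α^2+β^2)/3

lemma continuous_wfun (α β : ℝ) : Continuous (wfun α β) := by
  unfold wfun; fun_prop

lemma integral_tri1_w {α β : ℝ} (hα : 0 < α) (hβ : 0 < β) (hαβ : α + β < 1) :
    ∫ x in convexHull ℝ {a1 α β, a2 α β, a3 α β}, wfun α β x =
      4*(1-α-β) * ((2/3 - 4*β/3 + 2*β^2/3 + 4*α/3 + 4*α*β/3 + 2*α^2/3)/2 +
        (-4 + 8*β - 4*β^2 - 8*α/3 - 8*α*β/3 - 4*α^2)/6 + (-8 + 8*β/3 - 8*α/3)/6 +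
        (4 - 8*β + 4*β^2 + 4*α^2)/12 + (8 - 8*β + 8*α)/24 + (8:ℝ)/12) := by
  have hD : ((a2 α β).1-(a1 α β).1)*((a3 α β).2-(a1 α β).2) -
      ((a3 α β).1-(a1 α β).1)*((a2 α β).2-(a1 α β).2) = 4*(1-α-β) := by
    simp [a1, a2, a3]; ring
  rw [integral_tri _ _ _ _ (by rw [hD]; exact ne_of_gt (by linarith)), hD,
    abs_of_pos (by linarith : (0:ℝ) < 4*(1-α-β))]
  congr 1
  rw [show (fun p : ℝ × ℝ => wfun α β (trimap (a1 α β) (a2 α β) (a3 α β) p)) =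
      (fun p : ℝ × ℝ => (2/3 - 4*β/3 + 2*β^2/3 + 4*α/3 + 4*α*β/3 + 2*α^2/3) +
        (-4 + 8*β - 4*β^2 - 8*α/3 - 8*α*β/3 - 4*α^2)*p.1 + (-8 + 8*β/3 - 8*α/3)*p.2 +
        (4 - 8*β + 4*β^2 + 4*α^2)*p.1^2 + (8 - 8*β + 8*α)*(p.1*p.2) + 8*p.2^2) from
    funext fun p => by simp only [wfun, trimap, a1, a2, a3]; ring]
  exact integral_S_quad _ _ _ _ _ _

lemma integral_tri2_w {α β : ℝ} (hα : 0 < α) (hβ : 0 < β) (hαβ : α + β < 1) :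
    ∫ x in convexHull ℝ {a1 α β, a3 α β, a4 α β}, wfun α β x =
      4*(1+α+β) * ((2/3 - 4*β/3 + 2*β^2/3 + 4*α/3 + 4*α*β/3 + 2*α^2/3)/2 +
        (-8 + 8*β/3 - 8*α/3)/6 + (-4 + 8*β/3 - 4*β^2 - 8*α - 8*α*β/3 - 4*α^2)/6 +
        (8:ℝ)/12 + (8 - 8*β + 8*α)/24 + (4 + 4*β^2 + 8*α + 4*α^2)/12) := by
  have hD : ((a3 α β).1-(a1 α β).1)*((a4 α β).2-(a1 α β).2) -
      ((a4 α β).1-(a1 α β).1)*((a3 α β).2-(a1 α β).2) = 4*(1+α+β) := by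
    simp [a1, a3, a4]; ring
  rw [integral_tri _ _ _ _ (by rw [hD]; exact ne_of_gt (by linarith)), hD,
    abs_of_pos (by linarith : (0:ℝ) < 4*(1+α+β))]
  congr 1
  rw [show (fun p : ℝ × ℝ => wfun α β (trimap (a1 α β) (a3 α β) (a4 α β) p)) =
      (fun p : ℝ × ℝ => (2/3 - 4*β/3 + 2*β^2/3 + 4*α/3 + 4*α*β/3 + 2*α^2/3) +
        (-8 + 8*β/3 - 8*α/3)*p.1 + (-4 + 8*β/3 - 4*β^2 - 8*α - 8*α*β/3 - 4*α^2)*p.2 +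
        8*p.1^2 + (8 - 8*β + 8*α)*(p.1*p.2) + (4 + 4*β^2 + 8*α + 4*α^2)*p.2^2) from
    funext fun p => by simp only [wfun, trimap, a1, a3, a4]; ring]
  exact integral_S_quad _ _ _ _ _ _

lemma integral_quad_w {α β : ℝ} (hα : 0 < α) (hβ : 0 < β) (hαβ : α + β < 1) :
    ∫ x in Quad α β, wfun α β x = -8/3 - 8*(α^2+β^2)/9 := by
  rw [integral_quad_split hα hβ hαβ _ (continuous_wfun α β),
    integral_tri1_w hα hβ hαβ, integral_tri2_w hα hβ hαβ]
  ring

lemma volume_quad {α β : ℝ} (hα : 0 < α) (hβ : 0 < β) (hαβ : α + β < 1) :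
    (volume (Quad α β)).toReal = 4 := by
  have h1 : ∫ x in Quad α β, (1:ℝ) = 4 := by
    rw [integral_quad_split hα hβ hαβ _ continuous_const]
    have hD1 : ((a2 α β).1-(a1 α β).1)*((a3 α β).2-(a1 α β).2) -
        ((a3 α β).1-(a1 α β).1)*((a2 α β).2-(a1 α β).2) = 4*(1-α-β) := by
      simp [a1, a2, a3]; ring
    have hD2 : ((a3 α β).1-(a1 α β).1)*((a4 α β).2-(a1 α β).2) -
        ((a4 α β).1-(a1 α β).1)*((a3 α β).2-(a1 α β).2) = 4*(1+α+β) := by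
      simp [a1, a3, a4]; ring
    rw [integral_tri _ _ _ _ (by rw [hD1]; exact ne_of_gt (by linarith)), hD1,
      integral_tri _ _ _ _ (by rw [hD2]; exact ne_of_gt (by linarith)), hD2,
      abs_of_pos (by linarith : (0:ℝ) < 4*(1-α-β)),
      abs_of_pos (by linarith : (0:ℝ) < 4*(1+α+β))]
    rw [show (fun p : ℝ × ℝ => (1:ℝ)) = (fun p : ℝ × ℝ =>
      (1:ℝ) + 0*p.1 + 0*p.2 + 0*p.1^2 + 0*(p.1*p.2) + 0*p.2^2) from funext fun p => by ring]
    rw [integral_S_quad]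
    ring
  have h2 : ∫ x in Quad α β, (1:ℝ) = (volume (Quad α β)).toReal := by
    rw [MeasureTheory.setIntegral_const]
    simp [Measure.real]
  linarith [h1, h2.symm]


lemma edgeAvg_vfun (P R : ℝ × ℝ) (c0 c1 c2 c3 c4 : ℝ) :
    edgeAvg P R (fun p => c0 + c1*p.2 + c2*p.1 + c3*p.2^2 + c4*p.1^2) =
      c0 + c1*(P.2+R.2)/2 + c2*(P.1+R.1)/2 + c3*(P.2^2+P.2*R.2+R.2^2)/3 +
        c4*(P.1^2+P.1*R.1+R.1^2)/3 := by
  unfold edgeAvg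
  have : (fun t : ℝ => (fun p : ℝ × ℝ => c0 + c1*p.2 + c2*p.1 + c3*p.2^2 + c4*p.1^2)
      ((1 - t) • P + t • R)) = fun t : ℝ =>
      ((c0 + c1*P.2 + c2*P.1 + c3*P.2^2 + c4*P.1^2) +
        (c1*(R.2-P.2) + c2*(R.1-P.1) + 2*c3*P.2*(R.2-P.2) + 2*c4*P.1*(R.1-P.1))*t +
        (c3*(R.2-P.2)^2 + c4*(R.1-P.1)^2)*t^2 + 0*t^3) := by
    funext t
    simp only [Prod.smul_fst, Prod.smul_snd, Prod.fst_add, Prod.snd_add, smul_eq_mul]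
    ring
  rw [this, integral_cubic]
  ring


def Bv : Fin 5 → (ℝ × ℝ → ℝ) :=
  ![fun _ => 1, fun p => p.2, fun p => p.1, fun p => p.2 ^ 2, fun p => p.1 ^ 2]

lemma span_eq : QLTZspace = Submodule.span ℝ (Set.range Bv) := by
  unfold QLTZspace Bv
  congr 1
  ext f
  constructor
  · intro hf
    simp only [Set.mem_insert_iff, Set.mem_singleton_iff] at hf
    rcases hf with h | h | h | h | h <;> subst h
    · exact ⟨0, rfl⟩
    · exact ⟨1, rfl⟩
    · exact ⟨2, rfl⟩
    · exact ⟨3, rfl⟩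
    · exact ⟨4, rfl⟩
  · rintro ⟨i, rfl⟩
    fin_cases i <;> simp

lemma mem_QLTZ_iff (v : ℝ × ℝ → ℝ) : v ∈ QLTZspace ↔
    ∃ c : Fin 5 → ℝ, v = fun p => c 0 + c 1 * p.2 + c 2 * p.1 + c 3 * p.2^2 + c 4 * p.1^2 := by
  rw [span_eq, Submodule.mem_span_range_iff_exists_fun]
  constructor
  · rintro ⟨c, rfl⟩
    refine ⟨c, ?_⟩
    funext p
    simp [Fin.sum_univ_five, Bv]
    try ring
  · rintro ⟨c, rfl⟩
    refine ⟨c, ?_⟩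
    funext p
    simp [Fin.sum_univ_five, Bv]
    try ring

lemma continuous_of_mem {v : ℝ × ℝ → ℝ} (hv : v ∈ QLTZspace) : Continuous v := by
  obtain ⟨c, rfl⟩ := (mem_QLTZ_iff v).1 hv
  fun_prop

lemma linearIndependent_Bv : LinearIndependent ℝ Bv := by
  rw [Fintype.linearIndependent_iff]
  intro c hc
  have h : ∀ p : ℝ × ℝ, c 0 + c 1 * p.2 + c 2 * p.1 + c 3 * p.2^2 + c 4 * p.1^2 = 0 := by
    intro p
    have := congrFun hc p
    simpa [Fin.sum_univ_five, Bv] using this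
  have h1 := h (0, 0)
  have h2 := h (1, 0)
  have h3 := h (0, 1)
  have h4 := h (2, 0)
  have h5 := h (0, 2)
  norm_num at h1 h2 h3 h4 h5
  intro i
  fin_cases i <;> simp <;> linarith

lemma finrank_QLTZ : Module.finrank ℝ QLTZspace = 5 := by
  rw [span_eq]
  rw [finrank_span_eq_card linearIndependent_Bv]
  simp

instance : FiniteDimensional ℝ QLTZspace := by
  rw [span_eq]
  exact FiniteDimensional.span_of_finite ℝ (Set.finite_range Bv)


lemma quad_compact (α β : ℝ) : IsCompact (Quad α β) :=
  ((Set.toFinite _).isCompact_convexHull ℝ)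

lemma quadAvg_add {α β : ℝ} {u v : ℝ × ℝ → ℝ} (hu : Continuous u) (hv : Continuous v) :
    quadAvg α β (fun p => u p + v p) = quadAvg α β u + quadAvg α β v := by
  unfold quadAvg
  rw [MeasureTheory.integral_add
    (hu.continuousOn.integrableOn_compact (quad_compact α β))
    (hv.continuousOn.integrableOn_compact (quad_compact α β)), add_div]

lemma quadAvg_smul {α β : ℝ} (r : ℝ) (u : ℝ × ℝ → ℝ) :
    quadAvg α β (fun p => r * u p) = r * quadAvg α β u := by
  unfold quadAvg
  rw [MeasureTheory.integral_const_mul, mul_div_assoc]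

lemma edge_integrable {P R : ℝ × ℝ} {u : ℝ × ℝ → ℝ} (hu : Continuous u) :
    IntervalIntegrable (fun t : ℝ => u ((1 - t) • P + t • R)) volume 0 1 := by
  apply Continuous.intervalIntegrable
  apply hu.comp
  continuity

lemma edgeAvg_add {P R : ℝ × ℝ} {u v : ℝ × ℝ → ℝ} (hu : Continuous u) (hv : Continuous v) :
    edgeAvg P R (fun p => u p + v p) = edgeAvg P R u + edgeAvg P R v := by
  unfold edgeAvg
  exact intervalIntegral.integral_add (edge_integrable hu) (edge_integrable hv)

lemma edgeAvg_smul (P R : ℝ × ℝ) (r : ℝ) (u : ℝ × ℝ → ℝ) :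
    edgeAvg P R (fun p => r * u p) = r * edgeAvg P R u := by
  unfold edgeAvg
  exact intervalIntegral.integral_const_mul r _

lemma coeffs_zero {α β : ℝ} (hα : 0 < α) (hβ : 0 < β) (hαβ : α + β < 1) (c : Fin 5 → ℝ)
    (h0 : quadAvg α β (fun p => c 0 + c 1 * p.2 + c 2 * p.1 + c 3 * p.2^2 + c 4 * p.1^2) = 0)
    (h1 : edgeAvg (a1 α β) (a2 α β)
      (fun p => c 0 + c 1 * p.2 + c 2 * p.1 + c 3 * p.2^2 + c 4 * p.1^2) = 0)
    (h2 : edgeAvg (a2 α β) (a3 α β)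
      (fun p => c 0 + c 1 * p.2 + c 2 * p.1 + c 3 * p.2^2 + c 4 * p.1^2) = 0)
    (h3 : edgeAvg (a3 α β) (a4 α β)
      (fun p => c 0 + c 1 * p.2 + c 2 * p.1 + c 3 * p.2^2 + c 4 * p.1^2) = 0)
    (h4 : edgeAvg (a4 α β) (a1 α β)
      (fun p => c 0 + c 1 * p.2 + c 2 * p.1 + c 3 * p.2^2 + c 4 * p.1^2) = 0) :
    ∀ i, c i = 0 := by
  rw [edgeAvg_vfun] at h1 h2 h3 h4
  simp only [a1, a2, a3, a4] at h1 h2 h3 h4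
  have hc43 : c 4 = c 3 := by linear_combination (3/4)*(h1 + h3 - h2 - h4)
  have hc2 : c 2 = -(2*β/3) * c 3 := by linear_combination (1/2)*(h3 - h1)
  have hc1 : c 1 = -(2*α/3) * c 3 := by linear_combination (1/2)*(h4 - h2) - (2*α/3)*hc43
  have hc0 : c 0 = -(4+α^2+β^2)/3 * c 3 := by
    linear_combination (1/2)*(h1 + h3) - (1+α^2/3)*hc43
  have hv : (fun p : ℝ × ℝ => c 0 + c 1 * p.2 + c 2 * p.1 + c 3 * p.2^2 + c 4 * p.1^2) =
      fun p => c 3 * wfun α β p := by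
    funext p
    rw [hc0, hc1, hc2, hc43]
    simp only [wfun]
    ring
  rw [hv, quadAvg_smul] at h0
  have hqa : quadAvg α β (wfun α β) = (-8/3 - 8*(α^2+β^2)/9) / 4 := by
    unfold quadAvg
    rw [integral_quad_w hα hβ hαβ, volume_quad hα hβ hαβ]
  rw [hqa] at h0
  have hne : (-8/3 - 8*(α^2+β^2)/9) / 4 ≠ 0 := by
    have : (0:ℝ) < 8/3 + 8*(α^2+β^2)/9 := by positivity
    intro h
    rw [div_eq_zero_iff] at h
    rcases h with h | h <;> linarith
  have hc3 : c 3 = 0 := by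
    rcases mul_eq_zero.1 h0 with h | h
    · exact h
    · exact absurd h hne
  intro i
  fin_cases i
  · show c 0 = 0; rw [hc0, hc3]; ring
  · show c 1 = 0; rw [hc1, hc3]; ring
  · show c 2 = 0; rw [hc2, hc3]; ring
  · exact hc3
  · show c 4 = 0; rw [hc43]; exact hc3


lemma dof_add {α β : ℝ} (v w : QLTZspace) :
    (![quadAvg α β (v + w).1,
       edgeAvg (a1 α β) (a2 α β) (v + w).1,
       edgeAvg (a2 α β) (a3 α β) (v + w).1,
       edgeAvg (a3 α β) (a4 α β) (v + w).1,
       edgeAvg (a4 α β) (a1 α β) (v + w).1] : Fin 5 → ℝ) =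
    (![quadAvg α β v.1,
       edgeAvg (a1 α β) (a2 α β) v.1,
       edgeAvg (a2 α β) (a3 α β) v.1,
       edgeAvg (a3 α β) (a4 α β) v.1,
       edgeAvg (a4 α β) (a1 α β) v.1] : Fin 5 → ℝ) +
    (![quadAvg α β w.1,
       edgeAvg (a1 α β) (a2 α β) w.1,
       edgeAvg (a2 α β) (a3 α β) w.1,
       edgeAvg (a3 α β) (a4 α β) w.1,
       edgeAvg (a4 α β) (a1 α β) w.1] : Fin 5 → ℝ) := by
  have hv := continuous_of_mem v.2
  have hw := continuous_of_mem w.2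
  have hco : ((v + w : QLTZspace) : ℝ × ℝ → ℝ) = fun p => v.1 p + w.1 p := rfl
  funext i
  fin_cases i <;>
    simp only [Matrix.cons_val_zero, Matrix.cons_val_one, Matrix.head_cons, Pi.add_apply,
      Matrix.cons_val_two, Matrix.tail_cons, Matrix.cons_val_three, Matrix.cons_val_four,
      hco]
  · exact quadAvg_add hv hw
  · exact edgeAvg_add hv hw
  · exact edgeAvg_add hv hw
  · exact edgeAvg_add hv hw
  · exact edgeAvg_add hv hw

lemma dof_smul {α β : ℝ} (r : ℝ) (v : QLTZspace) :
    (![quadAvg α β (r • v).1,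
       edgeAvg (a1 α β) (a2 α β) (r • v).1,
       edgeAvg (a2 α β) (a3 α β) (r • v).1,
       edgeAvg (a3 α β) (a4 α β) (r • v).1,
       edgeAvg (a4 α β) (a1 α β) (r • v).1] : Fin 5 → ℝ) =
    r • (![quadAvg α β v.1,
       edgeAvg (a1 α β) (a2 α β) v.1,
       edgeAvg (a2 α β) (a3 α β) v.1,
       edgeAvg (a3 α β) (a4 α β) v.1,
       edgeAvg (a4 α β) (a1 α β) v.1] : Fin 5 → ℝ) := by
  have hco : ((r • v : QLTZspace) : ℝ × ℝ → ℝ) = fun p => r * v.1 p := rfl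
  funext i
  fin_cases i <;>
    simp only [Matrix.cons_val_zero, Matrix.cons_val_one, Matrix.head_cons, Pi.smul_apply,
      Matrix.cons_val_two, Matrix.tail_cons, Matrix.cons_val_three, Matrix.cons_val_four,
      hco, smul_eq_mul]
  · exact quadAvg_smul r v.1
  · exact edgeAvg_smul _ _ r v.1
  · exact edgeAvg_smul _ _ r v.1
  · exact edgeAvg_smul _ _ r v.1
  · exact edgeAvg_smul _ _ r v.1

end QLTZaux

open QLTZaux

/-- Unisolvence of the QLTZ element on the reference quadrilateral: the linear map
v ↦ (⨍_Q v, ⨍_{e₁}v, ⨍_{e₂}v, ⨍_{e₃}v, ⨍_{e₄}v) from V = span{1, ξ, η, ξ², η²} to ℝ⁵ is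
bijective; equivalently, every tuple of degrees of freedom is attained by exactly one
v ∈ V. In particular dim V = 5. -/
theorem QLTZ_unisolvent (α β : ℝ) (hα : 0 < α) (hβ : 0 < β) (hαβ : α + β < 1) :
    Function.Bijective (fun v : QLTZspace =>
      (![quadAvg α β v.1,
         edgeAvg (a1 α β) (a2 α β) v.1,
         edgeAvg (a2 α β) (a3 α β) v.1,
         edgeAvg (a3 α β) (a4 α β) v.1,
         edgeAvg (a4 α β) (a1 α β) v.1] : Fin 5 → ℝ)) ∧
    (∀ c : Fin 5 → ℝ, ∃! v : ℝ × ℝ → ℝ, v ∈ QLTZspace ∧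
      quadAvg α β v = c 0 ∧
      edgeAvg (a1 α β) (a2 α β) v = c 1 ∧
      edgeAvg (a2 α β) (a3 α β) v = c 2 ∧
      edgeAvg (a3 α β) (a4 α β) v = c 3 ∧
      edgeAvg (a4 α β) (a1 α β) v = c 4) ∧
    Module.finrank ℝ QLTZspace = 5 := by
  set T : QLTZspace →ₗ[ℝ] (Fin 5 → ℝ) :=
    { toFun := fun v : QLTZspace =>
        (![quadAvg α β v.1,
           edgeAvg (a1 α β) (a2 α β) v.1,
           edgeAvg (a2 α β) (a3 α β) v.1,
           edgeAvg (a3 α β) (a4 α β) v.1,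
           edgeAvg (a4 α β) (a1 α β) v.1] : Fin 5 → ℝ)
      map_add' := fun v w => dof_add v w
      map_smul' := fun r v => dof_smul r v } with hT
  have hinj : Function.Injective T := by
    rw [← LinearMap.ker_eq_bot, LinearMap.ker_eq_bot']
    intro z hz
    obtain ⟨c, hc⟩ := (mem_QLTZ_iff z.1).1 z.2
    have hdof : ∀ i : Fin 5, (![quadAvg α β z.1,
        edgeAvg (a1 α β) (a2 α β) z.1,
        edgeAvg (a2 α β) (a3 α β) z.1,
        edgeAvg (a3 α β) (a4 α β) z.1,
        edgeAvg (a4 α β) (a1 α β) z.1] : Fin 5 → ℝ) i = 0 := fun i => congrFun hz i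
    have h0 := hdof 0
    have h1 := hdof 1
    have h2 := hdof 2
    have h3 := hdof 3
    have h4 := hdof 4
    simp only [Matrix.cons_val_zero, Matrix.cons_val_one, Matrix.head_cons,
      Matrix.cons_val_two, Matrix.tail_cons, Matrix.cons_val_three,
      Matrix.cons_val_four] at h0 h1 h2 h3 h4
    rw [hc] at h0 h1 h2 h3 h4
    have hcz := coeffs_zero hα hβ hαβ c h0 h1 h2 h3 h4
    apply Subtype.ext
    rw [hc]
    funext p
    simp [hcz 0, hcz 1, hcz 2, hcz 3, hcz 4]
  have hrank : Module.finrank ℝ QLTZspace = Module.finrank ℝ (Fin 5 → ℝ) := by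
    rw [finrank_QLTZ, Module.finrank_fin_fun]
  have hsurj : Function.Surjective T :=
    (LinearMap.injective_iff_surjective_of_finrank_eq_finrank hrank).1 hinj
  refine ⟨⟨hinj, hsurj⟩, ?_, finrank_QLTZ⟩
  intro c
  obtain ⟨z, hz⟩ := hsurj c
  have hz0 := congrFun hz 0
  have hz1 := congrFun hz 1
  have hz2 := congrFun hz 2
  have hz3 := congrFun hz 3
  have hz4 := congrFun hz 4
  simp only [hT, LinearMap.coe_mk, AddHom.coe_mk, Matrix.cons_val_zero, Matrix.cons_val_one,
    Matrix.head_cons, Matrix.cons_val_two, Matrix.tail_cons, Matrix.cons_val_three,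
    Matrix.cons_val_four] at hz0 hz1 hz2 hz3 hz4
  refine ⟨z.1, ⟨z.2, hz0, hz1, hz2, hz3, hz4⟩, ?_⟩
  rintro v' ⟨hmem, e0, e1, e2, e3, e4⟩
  have : T ⟨v', hmem⟩ = c := by
    funext i
    fin_cases i <;>
      simp only [hT, LinearMap.coe_mk, AddHom.coe_mk, Matrix.cons_val_zero, Matrix.cons_val_one,
        Matrix.head_cons, Matrix.cons_val_two, Matrix.tail_cons, Matrix.cons_val_three,
        Matrix.cons_val_four] <;>
      [exact e0; exact e1; exact e2; exact e3; exact e4]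
  have heq := hinj (this.trans hz.symm)
  exact congrArg Subtype.val heq
end
end
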